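/- arXiv:0710.2746 — 2 statements merged into one kernel-verified Lean document; each statement's English description precedes it below -/
import Mathlib

section
/- Consider the histogram kernel on [0,1]: for θ ∈ [0,1] and positive integer m, K(x;θ,m) = m if there exists i ∈ {1,…,m} such that both x and θ lie in ((i−1)/m, i/m], and K(x;θ,m) = 0 otherwise. Let Π be a prior on M([0,1] × ℕ₊) whose weak support contains all of M([0,1] × ℕ₊), and for P ∈ M([0,1] × ℕ₊) set f_P(x) = ∫ K(x;θ,m) dP(θ,m). If f0 is a continuous probability density on [0,1], then for every ε > 0, Π{P : ∫_0^1 f0 log(f0 / f_P) < ε} > 0. -/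
open MeasureTheory Real Filter Topology

lemma isOpen_probGT {Ω : Type*} [MeasurableSpace Ω] [PseudoEMetricSpace Ω]
    [OpensMeasurableSpace Ω] {G : Set Ω} (hG : IsOpen G) (t : ENNReal) :
    IsOpen {P : ProbabilityMeasure Ω | t < (P : Measure Ω) G} := by
  rw [isOpen_iff_mem_nhds]
  intro P hP
  have key : (P : Measure Ω) G ≤ (𝓝 P).liminf fun Q : ProbabilityMeasure Ω => (Q : Measure Ω) G :=
    ProbabilityMeasure.le_liminf_measure_open_of_tendsto tendsto_id hG
  exact Filter.eventually_lt_of_lt_liminf (lt_of_lt_of_le hP key)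

/-- The measurable structure on the space of probability measures, induced from the
σ-algebra on measures generated by the evaluation maps. -/
noncomputable instance ProbabilityMeasure.instMeasurableSpace' {Ω : Type*} [MeasurableSpace Ω] :
    MeasurableSpace (MeasureTheory.ProbabilityMeasure Ω) :=
  inferInstanceAs (MeasurableSpace {μ : MeasureTheory.Measure Ω // MeasureTheory.IsProbabilityMeasure μ})

instance : BorelSpace (Set.Icc (0 : ℝ) 1) := Subtype.borelSpace _
instance : BorelSpace {n : ℕ // 0 < n} := Subtype.borelSpace _

set_option maxHeartbeats 2000000 in
/-- **Theorem 9**: KL property for the histogram kernel mixture prior on `[0,1]`: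
if `f0` is continuous on `[0,1]` and the prior on mixing distributions over
`[0,1] × ℕ₊` has full weak support, then `f0` is in the KL support. -/
theorem kl_property_of_histogram_mixture
    (K : ℝ → ℝ → ℕ → ℝ)
    (hK_pos : ∀ (x θ : ℝ) (m : ℕ),
      (∃ i : ℕ, 1 ≤ i ∧ i ≤ m ∧ x ∈ Set.Ioc ((i - 1 : ℝ) / m) ((i : ℝ) / m) ∧
        θ ∈ Set.Ioc ((i - 1 : ℝ) / m) ((i : ℝ) / m)) → K x θ m = m)
    (hK_zero : ∀ (x θ : ℝ) (m : ℕ),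
      ¬(∃ i : ℕ, 1 ≤ i ∧ i ≤ m ∧ x ∈ Set.Ioc ((i - 1 : ℝ) / m) ((i : ℝ) / m) ∧
        θ ∈ Set.Ioc ((i - 1 : ℝ) / m) ((i : ℝ) / m)) → K x θ m = 0)
    (f0 : ℝ → ℝ) (hf0_cont : ContinuousOn f0 (Set.Icc 0 1))
    (hf0_nonneg : ∀ x ∈ Set.Icc (0 : ℝ) 1, 0 ≤ f0 x)
    (hf0_prob : ∫ x in Set.Icc (0 : ℝ) 1, f0 x = 1)
    (Pr : Measure (ProbabilityMeasure (Set.Icc (0 : ℝ) 1 × {n : ℕ // 0 < n})))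
    [IsProbabilityMeasure Pr]
    (fP : ProbabilityMeasure (Set.Icc (0 : ℝ) 1 × {n : ℕ // 0 < n}) → ℝ → ℝ)
    (hfP : ∀ P x, fP P x =
      ∫ p : Set.Icc (0 : ℝ) 1 × {n : ℕ // 0 < n}, K x (p.1 : ℝ) (p.2 : ℕ)
        ∂(P : Measure (Set.Icc (0 : ℝ) 1 × {n : ℕ // 0 < n})))
    -- the weak support of the prior is everything
    (hPr_supp : ∀ U : Set (ProbabilityMeasure (Set.Icc (0 : ℝ) 1 × {n : ℕ // 0 < n})),
      IsOpen U → U.Nonempty → 0 < Pr U) :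
    ∀ ε > (0 : ℝ),
      0 < Pr {P | (∫ x in Set.Icc (0 : ℝ) 1, f0 x * log (f0 x / fP P x)) < ε} := by
  intro ε hε
  set Ω := (Set.Icc (0 : ℝ) 1 × {n : ℕ // 0 < n}) with hΩ
  -- K is nonnegative
  have hK_nonneg : ∀ (x θ : ℝ) (m : ℕ), 0 ≤ K x θ m := by
    intro x θ m
    by_cases h : (∃ i : ℕ, 1 ≤ i ∧ i ≤ m ∧ x ∈ Set.Ioc ((i - 1 : ℝ) / m) ((i : ℝ) / m) ∧
        θ ∈ Set.Ioc ((i - 1 : ℝ) / m) ((i : ℝ) / m))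
    · rw [hK_pos x θ m h]; positivity
    · rw [hK_zero x θ m h]
  have hfP_nonneg : ∀ P x, 0 ≤ fP P x := by
    intro P x
    rw [hfP]
    exact integral_nonneg fun p => hK_nonneg _ _ _
  set c := ε / 2 with hc
  have hc0 : 0 < c := by positivity
  have hcε : c < ε := by simp [hc]; linarith
  -- uniform continuity
  obtain ⟨δ, hδ0, hδ⟩ : ∃ δ > 0, ∀ x ∈ Set.Icc (0:ℝ) 1, ∀ y ∈ Set.Icc (0:ℝ) 1,
      dist x y < δ → dist (f0 x) (f0 y) < c / 2 := by
    have h := (isCompact_Icc.uniformContinuousOn_of_continuous hf0_cont)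
    rw [Metric.uniformContinuousOn_iff] at h
    obtain ⟨δ, hδ0, hδ⟩ := h (c/2) (by positivity)
    exact ⟨δ, hδ0, fun x hx y hy hxy => hδ x hx y hy hxy⟩
  obtain ⟨m0, hm0⟩ := exists_nat_gt (1 / δ)
  have hm0pos : 0 < m0 := by
    have : (0:ℝ) < m0 := lt_trans (by positivity) hm0
    exact_mod_cast this
  have hm0R : (0:ℝ) < m0 := by exact_mod_cast hm0pos
  have h1m0 : 1 / (m0:ℝ) < δ := by
    rw [div_lt_iff₀ hm0R]
    rw [div_lt_iff₀ hδ0] at hm0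
    linarith [hm0]
  -- bins are inside [0,1]
  have hbin_sub : ∀ i : ℕ, i < m0 → Set.Icc ((i:ℝ)/m0) ((i+1)/m0) ⊆ Set.Icc (0:ℝ) 1 := by
    intro i hi
    apply Set.Icc_subset_Icc
    · positivity
    · rw [div_le_one hm0R]; exact_mod_cast hi
  -- maximum points on each bin
  have hmaxall : ∀ i : ℕ, ∃ z : ℝ, i < m0 → (z ∈ Set.Icc ((i:ℝ)/m0) ((i+1)/m0) ∧
      ∀ y ∈ Set.Icc ((i:ℝ)/m0) ((i+1)/m0), f0 y ≤ f0 z) := by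
    intro i
    by_cases hi : i < m0
    · have hne : (Set.Icc ((i:ℝ)/m0) ((i+1)/m0)).Nonempty := by
        apply Set.nonempty_Icc.2
        gcongr
        linarith
      obtain ⟨zz, hzz, hzmax⟩ := isCompact_Icc.exists_isMaxOn hne
        (hf0_cont.mono (hbin_sub i hi))
      exact ⟨zz, fun _ => ⟨hzz, fun y hy => hzmax hy⟩⟩
    · exact ⟨0, fun h => absurd h hi⟩
  choose z hz using hmaxall
  set b : ℕ → ℝ := fun i => f0 (z i) with hb
  set t : ℕ → ℝ := fun i => b i / (m0 * (1 + c)) with ht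
  have hzIn : ∀ i, i < m0 → z i ∈ Set.Icc ((i:ℝ)/m0) (((i:ℝ)+1)/m0) := fun i hi => (hz i hi).1
  have hbmax : ∀ i, i < m0 → ∀ y ∈ Set.Icc ((i:ℝ)/m0) (((i:ℝ)+1)/m0), f0 y ≤ b i :=
    fun i hi => (hz i hi).2
  have hb_nonneg : ∀ i, i < m0 → 0 ≤ b i := fun i hi =>
    hf0_nonneg _ (hbin_sub i hi (hzIn i hi))
  have ht_nonneg : ∀ i, i < m0 → 0 ≤ t i := fun i hi =>
    div_nonneg (hb_nonneg i hi) (by positivity)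
  have hblow : ∀ i, i < m0 → ∀ y ∈ Set.Icc ((i:ℝ)/m0) (((i:ℝ)+1)/m0), b i - c/2 ≤ f0 y := by
    intro i hi y hy
    have hz' := hzIn i hi
    have hlen : ((i:ℝ)+1)/m0 - (i:ℝ)/m0 = 1/m0 := by field_simp; ring
    have h1 : dist (z i) y < δ := by
      rw [Real.dist_eq]
      have : |z i - y| ≤ 1/m0 := by
        rw [abs_le]
        simp only [Set.mem_Icc] at hz' hy
        constructor <;> linarith
      linarith
    have h2 := hδ (z i) (hbin_sub i hi hz') y (hbin_sub i hi hy) h1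
    rw [Real.dist_eq, abs_lt] at h2
    have : f0 (z i) = b i := rfl
    linarith
  have hf0_int : IntegrableOn f0 (Set.Icc (0:ℝ) 1) volume :=
    hf0_cont.integrableOn_compact isCompact_Icc
  have hbin_int : ∀ i, i < m0 → (b i - c/2)/m0 ≤ ∫ y in Set.Ioc ((i:ℝ)/m0) (((i:ℝ)+1)/m0), f0 y := by
    intro i hi
    have hsub : Set.Ioc ((i:ℝ)/m0) (((i:ℝ)+1)/m0) ⊆ Set.Icc ((i:ℝ)/m0) (((i:ℝ)+1)/m0) :=
      Set.Ioc_subset_Icc_self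
    have hint : IntegrableOn f0 (Set.Ioc ((i:ℝ)/m0) (((i:ℝ)+1)/m0)) volume :=
      hf0_int.mono_set (hsub.trans (hbin_sub i hi))
    have hle : (i:ℝ)/m0 ≤ ((i:ℝ)+1)/m0 := by gcongr; linarith
    have hconst : (∫ _y in Set.Ioc ((i:ℝ)/m0) (((i:ℝ)+1)/m0), (b i - c/2)) = (b i - c/2)/m0 := by
      rw [setIntegral_const, measureReal_def, Real.volume_Ioc, ENNReal.toReal_ofReal (by linarith)]
      have hlen : ((i:ℝ)+1)/m0 - (i:ℝ)/m0 = 1/m0 := by field_simp; ring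
      rw [hlen]
      simp [smul_eq_mul]
      ring
    rw [← hconst]
    refine setIntegral_mono_on ?_ hint measurableSet_Ioc
      (fun y hy => hblow i hi y (hsub hy))
    exact integrableOn_const (by rw [Real.volume_Ioc]; exact ENNReal.ofReal_ne_top)
  have hsum_int : (∑ i ∈ Finset.range m0, ∫ y in Set.Ioc ((i:ℝ)/m0) (((i:ℝ)+1)/m0), f0 y) = 1 := by
    have hintk : ∀ k, k < m0 → IntervalIntegrable f0 volume ((k:ℝ)/m0) (((k:ℝ)+1)/m0) := by
      intro k hk
      apply ContinuousOn.intervalIntegrable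
      have hle : (k:ℝ)/m0 ≤ ((k:ℝ)+1)/m0 := by gcongr; linarith
      rw [Set.uIcc_of_le hle]
      exact hf0_cont.mono (hbin_sub k hk)
    have key := intervalIntegral.sum_integral_adjacent_intervals
      (a := fun k : ℕ => (k:ℝ)/m0) (n := m0) (f := f0) (μ := volume)
      (fun k hk => by push_cast; exact hintk k hk)
    simp only [Nat.cast_zero, zero_div, Nat.cast_add, Nat.cast_one,
      div_self (ne_of_gt hm0R)] at key
    have heq : ∀ k ∈ Finset.range m0,
        (∫ y in Set.Ioc ((k:ℝ)/m0) (((k:ℝ)+1)/m0), f0 y) = ∫ y in ((k:ℝ))/m0..(((k:ℝ)+1))/m0, f0 y := by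
      intro k hk
      rw [intervalIntegral.integral_of_le (by gcongr; linarith)]
    rw [Finset.sum_congr rfl heq, key, intervalIntegral.integral_of_le (by norm_num),
      ← MeasureTheory.integral_Icc_eq_integral_Ioc]
    exact hf0_prob
  have hsum_t : (∑ i ∈ Finset.range m0, t i) < 1 := by
    have h1 : (∑ i ∈ Finset.range m0, ((b i - c/2)/m0)) ≤ 1 := by
      rw [← hsum_int]
      exact Finset.sum_le_sum fun i hi => hbin_int i (Finset.mem_range.1 hi)
    have h2 : (∑ i ∈ Finset.range m0, b i) ≤ m0 * (1 + c/2) := by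
      have hs : (∑ i ∈ Finset.range m0, ((b i - c/2)/m0))
          = ((∑ i ∈ Finset.range m0, b i) - m0 * (c/2))/m0 := by
        rw [← Finset.sum_div, Finset.sum_sub_distrib, Finset.sum_const, Finset.card_range,
          nsmul_eq_mul]
      rw [hs, div_le_one hm0R] at h1
      linarith
    have h3 : (∑ i ∈ Finset.range m0, t i) = (∑ i ∈ Finset.range m0, b i)/(m0 * (1+c)) := by
      rw [← Finset.sum_div]
    rw [h3, div_lt_one (by positivity)]
    nlinarith [hm0R, hc0]
  set ρ : ℝ := (1 - ∑ i ∈ Finset.range m0, t i)/m0 with hρdef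
  have hρ : 0 < ρ := by
    apply div_pos _ hm0R
    linarith
  set M0 : {n : ℕ // 0 < n} := ⟨m0, hm0pos⟩ with hM0
  set Gs : ℕ → Set Ω := fun i =>
    {p : Ω | (p.1 : ℝ) ∈ Set.Ioo ((i:ℝ)/m0) (((i:ℝ)+1)/m0) ∧ p.2 = M0} with hGs
  have hGopen : ∀ i, IsOpen (Gs i) := by
    intro i
    apply IsOpen.inter
    · exact (isOpen_Ioo.preimage continuous_subtype_val).preimage continuous_fst
    · exact (isOpen_discrete {M0}).preimage continuous_snd
  have hGmeas : ∀ i, MeasurableSet (Gs i) := fun i => (hGopen i).measurableSet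
  -- the points carrying the masses of P0
  have hptall : ∀ i : ℕ, ∃ p : Ω, i < m0 → p ∈ Gs i := by
    intro i
    by_cases hi : i < m0
    · have hm1 : (0:ℝ) ≤ (2*(i:ℝ)+1)/(2*m0) := by positivity
      have hm2 : (2*(i:ℝ)+1)/(2*m0) ≤ 1 := by
        rw [div_le_one (by positivity)]
        have : (i:ℝ) + 1 ≤ m0 := by exact_mod_cast hi
        linarith
      refine ⟨(⟨(2*(i:ℝ)+1)/(2*m0), hm1, hm2⟩, M0), fun _ => ⟨⟨?_, ?_⟩, rfl⟩⟩
      · rw [div_lt_div_iff₀ hm0R (by positivity)]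
        ring_nf
        nlinarith [hm0R]
      · rw [div_lt_div_iff₀ (by positivity) hm0R]
        ring_nf
        nlinarith [hm0R]
    · exact ⟨(⟨0, by norm_num, by norm_num⟩, M0), fun h => absurd h hi⟩
  choose pt hpt using hptall
  set μ0 : Measure Ω :=
    ∑ i ∈ Finset.range m0, (ENNReal.ofReal (t i + ρ)) • Measure.dirac (pt i) with hμ0
  have hμ0prob : IsProbabilityMeasure μ0 := by
    constructor
    rw [hμ0, Measure.finset_sum_apply]
    simp only [Measure.smul_apply, measure_univ, smul_eq_mul, mul_one]
    rw [← ENNReal.ofReal_sum_of_nonneg (fun i hi => by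
      have := ht_nonneg i (Finset.mem_range.1 hi); linarith)]
    rw [Finset.sum_add_distrib, Finset.sum_const, Finset.card_range, nsmul_eq_mul, hρdef]
    rw [show (∑ i ∈ Finset.range m0, t i) + (m0:ℝ) * ((1 - ∑ i ∈ Finset.range m0, t i)/m0) = 1 by
      field_simp; ring]
    exact ENNReal.ofReal_one
  set P0 : ProbabilityMeasure Ω := ⟨μ0, hμ0prob⟩ with hP0
  set U : Set (ProbabilityMeasure Ω) :=
    ⋂ i ∈ Finset.range m0, {P : ProbabilityMeasure Ω |
      ENNReal.ofReal (t i) < (P : Measure Ω) (Gs i)} with hU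
  have hUopen : IsOpen U := isOpen_biInter_finset fun i _ => isOpen_probGT (hGopen i) _
  have hP0U : P0 ∈ U := by
    rw [hU]
    refine Set.mem_iInter₂.2 fun i hi => ?_
    have hi' := Finset.mem_range.1 hi
    have hterm : ENNReal.ofReal (t i + ρ) ≤ (μ0 : Measure Ω) (Gs i) := by
      rw [hμ0, Measure.finset_sum_apply]
      refine le_trans ?_ (Finset.single_le_sum (f := fun j =>
        (ENNReal.ofReal (t j + ρ) • Measure.dirac (pt j) : Measure Ω) (Gs i))
        (fun j _ => zero_le) hi)
      simp only [Measure.smul_apply, smul_eq_mul]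
      rw [Measure.dirac_apply_of_mem (hpt i hi'), mul_one]
    refine lt_of_lt_of_le ?_ hterm
    rw [ENNReal.ofReal_lt_ofReal_iff (by have := ht_nonneg i hi'; linarith)]
    linarith
  -- every point of (0,1] belongs to some bin
  have hbin_mem : ∀ x ∈ Set.Ioc (0:ℝ) 1, ∃ i, i < m0 ∧
      x ∈ Set.Ioc ((i:ℝ)/m0) (((i:ℝ)+1)/m0) := by
    intro x hx
    obtain ⟨hx0, hx1⟩ := hx
    have hxm0 : 0 < x * m0 := by positivity
    set j := ⌈x * (m0:ℝ)⌉₊ with hj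
    have hj1 : 1 ≤ j := Nat.one_le_ceil_iff.2 hxm0
    have hjm0 : j ≤ m0 := Nat.ceil_le.2 (by nlinarith)
    refine ⟨j - 1, by omega, ?_, ?_⟩
    · rw [div_lt_iff₀ hm0R]
      have hcast : ((j - 1 : ℕ):ℝ) = (j:ℝ) - 1 := by
        rw [Nat.cast_sub hj1, Nat.cast_one]
      rw [hcast]
      have := Nat.ceil_lt_add_one (le_of_lt hxm0)
      rw [← hj] at this
      linarith
    · rw [le_div_iff₀ hm0R]
      have hcast : ((j - 1 : ℕ):ℝ) + 1 = (j:ℝ) := by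
        rw [Nat.cast_sub hj1, Nat.cast_one]; ring
      rw [hcast]
      exact Nat.le_ceil _
  -- the key inclusion: U is contained in the event
  have hU_event : U ⊆ {P : ProbabilityMeasure Ω |
      (∫ x in Set.Icc (0 : ℝ) 1, f0 x * log (f0 x / fP P x)) < ε} := by
    intro P hPU
    have hPU' : ∀ i, i < m0 → ENNReal.ofReal (t i) < (P : Measure Ω) (Gs i) := by
      intro i hi
      exact Set.mem_iInter₂.1 hPU i (Finset.mem_range.2 hi)
    -- lower bound for fP on (0,1]
    have hfPlow : ∀ x ∈ Set.Ioc (0:ℝ) 1, fP P x = 0 ∨ f0 x / (1 + c) ≤ fP P x := by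
      intro x hx
      obtain ⟨i, hi, hxbin⟩ := hbin_mem x hx
      by_cases hInt : Integrable (fun p : Ω => K x (p.1:ℝ) (p.2:ℕ)) (P : Measure Ω)
      · right
        have hind : ∀ p : Ω, (Gs i).indicator (fun _ => (m0:ℝ)) p ≤ K x (p.1:ℝ) (p.2:ℕ) := by
          intro p
          by_cases hpG : p ∈ Gs i
          · rw [Set.indicator_of_mem hpG]
            obtain ⟨hθ, hsnd⟩ := hpG
            have hp2 : (p.2 : ℕ) = m0 := by rw [hsnd]
            have hKval : K x (p.1:ℝ) (p.2:ℕ) = ((p.2:ℕ):ℝ) := by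
              apply hK_pos
              refine ⟨i + 1, by omega, by omega, ?_, ?_⟩
              · rw [hp2]; push_cast
                rw [show ((i:ℝ) + 1 - 1) = (i:ℝ) by ring]
                exact hxbin
              · rw [hp2]; push_cast
                rw [show ((i:ℝ) + 1 - 1) = (i:ℝ) by ring]
                exact ⟨hθ.1, le_of_lt hθ.2⟩
            rw [hKval, hp2]
          · rw [Set.indicator_of_notMem hpG]
            exact hK_nonneg _ _ _
        have hind_int : Integrable ((Gs i).indicator fun _ => (m0:ℝ)) (P : Measure Ω) :=
          (integrable_indicator_iff (hGmeas i)).2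
            (integrableOn_const (measure_ne_top _ _))
        have hmono : (∫ p : Ω, (Gs i).indicator (fun _ => (m0:ℝ)) p ∂(P : Measure Ω))
            ≤ ∫ p : Ω, K x (p.1:ℝ) (p.2:ℕ) ∂(P : Measure Ω) :=
          integral_mono hind_int hInt hind
        rw [integral_indicator_const _ (hGmeas i)] at hmono
        have htoReal : t i ≤ (((P : Measure Ω)) (Gs i)).toReal :=
          (ENNReal.ofReal_le_iff_le_toReal (measure_ne_top _ _)).1 (le_of_lt (hPU' i hi))
        have hchain : f0 x / (1 + c) ≤ (m0:ℝ) * t i := by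
          have hbf : f0 x ≤ b i := hbmax i hi x (Set.Ioc_subset_Icc_self hxbin)
          have : (m0:ℝ) * t i = b i / (1 + c) := by
            show (m0:ℝ) * (b i / (m0 * (1 + c))) = b i / (1 + c)
            rw [mul_comm (m0:ℝ) (1 + c), ← div_div, mul_div_cancel₀ _ (ne_of_gt hm0R)]
          rw [this]
          gcongr
        refine le_trans hchain ?_
        rw [hfP]
        refine le_trans ?_ hmono
        rw [smul_eq_mul, mul_comm]
        gcongr
        exact htoReal
      · left
        rw [hfP]
        exact integral_undef hInt
    -- pointwise bound of the integrand
    have hpoint : ∀ x ∈ Set.Icc (0:ℝ) 1, f0 x * log (f0 x / fP P x) ≤ c * f0 x := by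
      intro x hx
      have hf0x := hf0_nonneg x hx
      by_cases hxIoc : x ∈ Set.Ioc (0:ℝ) 1
      · rcases hfPlow x hxIoc with h0 | hlow
        · rw [h0, div_zero, Real.log_zero, mul_zero]
          exact mul_nonneg (le_of_lt hc0) hf0x
        · rcases eq_or_lt_of_le hf0x with hf0z | hf0pos
          · rw [← hf0z]; simp
          · have hfPpos : 0 < fP P x :=
              lt_of_lt_of_le (div_pos hf0pos (by positivity)) hlow
            have hratio : f0 x / fP P x ≤ 1 + c := by
              rw [div_le_iff₀ hfPpos]
              have := (div_le_iff₀ (by positivity : (0:ℝ) < 1 + c)).1 hlow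
              linarith
            have hlog : log (f0 x / fP P x) ≤ c := by
              refine le_trans ((Real.log_le_log_iff (div_pos hf0pos hfPpos) (by positivity)).2 hratio) ?_
              have := Real.log_le_sub_one_of_pos (by positivity : (0:ℝ) < 1 + c)
              linarith
            nlinarith
      · have hx0 : x = 0 := by
          simp only [Set.mem_Icc] at hx
          simp only [Set.mem_Ioc, not_and_or, not_lt, not_le] at hxIoc
          rcases hxIoc with h | h
          · linarith [hx.1, h]
          · linarith [hx.2, h]
        have hK0 : ∀ (θ : ℝ) (m : ℕ), K 0 θ m = 0 := by
          intro θ m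
          apply hK_zero
          rintro ⟨i, hi1, _, hmem, -⟩
          have hlb : (0:ℝ) ≤ ((i:ℝ) - 1) / m := by
            apply div_nonneg _ (Nat.cast_nonneg m)
            have : (1:ℝ) ≤ i := by exact_mod_cast hi1
            linarith
          exact absurd hmem.1 (not_lt.2 hlb)
        have hfP0 : fP P 0 = 0 := by
          rw [hfP]
          simp only [hK0]
          exact integral_zero _ _
        rw [hx0, hfP0, div_zero, Real.log_zero, mul_zero]
        have : 0 ≤ f0 (0:ℝ) := hf0_nonneg 0 (by norm_num)
        positivity
    -- conclude the integral bound
    show (∫ x in Set.Icc (0 : ℝ) 1, f0 x * log (f0 x / fP P x)) < ε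
    by_cases hInt2 : IntegrableOn (fun x => f0 x * log (f0 x / fP P x)) (Set.Icc (0:ℝ) 1) volume
    · have hcf0_int : IntegrableOn (fun x => c * f0 x) (Set.Icc (0:ℝ) 1) volume :=
        hf0_int.const_mul c
      have hle := setIntegral_mono_on hInt2 hcf0_int measurableSet_Icc hpoint
      have heq : (∫ x in Set.Icc (0:ℝ) 1, c * f0 x) = c := by
        rw [integral_const_mul, hf0_prob, mul_one]
      rw [heq] at hle
      linarith
    · rw [integral_undef hInt2]
      exact hε
  exact lt_of_lt_of_le (hPr_supp U hUopen ⟨P0, hP0U⟩) (measure_mono hU_event)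
end

section
/- Let f0 be a continuous, bounded probability density on [0,∞) with 0 < f0(x) ≤ M < ∞ for all x > 0, satisfying |∫ f0 log f0| < ∞, ∫ f0(x) log(f0(x)/φ_δ(x)) dx < ∞ for some δ > 0 (with φ_δ(x) = inf{f0(t) : t ∈ [x, x+δ]} for 0 < x < 1 and φ_δ(x) = inf{f0(t) : t ∈ (x−δ, x]} for x ≥ 1), and ∫ max(x^{−η−2}, x^{η+2}) f0(x) dx < ∞ for some η > 0. For m > 1 define K_m(x;α) = m^α x^{α−1} e^{−mx} / Γ(α) (the Gamma(α, 1/m) density), t_m = (∫_{1/m}^m f0(s) ds)^{−1}, and f_m(x) = t_m ∫_2^{1+m²} K_m(x;α) m^{−1} f0((α−1)/m) dα. Then for each x > 0, f_m(x) → f0(x) as m → ∞. -/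
open MeasureTheory Real Filter

namespace GammaSmooth


noncomputable def pois (t : ℝ) (n : ℕ) : ℝ := t ^ n * Real.exp (-t) / n.factorial

lemma pois_nonneg {t : ℝ} (ht : 0 ≤ t) (n : ℕ) : 0 ≤ pois t n := by
  unfold pois; positivity

lemma tsum_exp (y : ℝ) : ∑' n : ℕ, y ^ n / n.factorial = Real.exp y := by
  rw [Real.exp_eq_exp_ℝ, NormedSpace.exp_eq_tsum_div]

lemma pois_mul_exp (t θ : ℝ) (n : ℕ) :
    pois t n * Real.exp (θ * n) = (t * Real.exp θ) ^ n / n.factorial * Real.exp (-t) := by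
  unfold pois
  rw [mul_pow, ← Real.exp_nat_mul]
  ring_nf

lemma summable_pois_exp (t θ : ℝ) : Summable (fun n : ℕ => pois t n * Real.exp (θ * n)) := by
  have := (Real.summable_pow_div_factorial (t * Real.exp θ)).mul_right (Real.exp (-t))
  refine this.congr fun n => ?_
  rw [pois_mul_exp]

lemma summable_pois (t : ℝ) : Summable (pois t) := by
  have := summable_pois_exp t 0
  refine this.congr fun n => ?_
  simp

lemma tsum_pois_exp (t θ : ℝ) :
    ∑' n : ℕ, pois t n * Real.exp (θ * n) = Real.exp (t * Real.exp θ - t) := by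
  have : ∀ n : ℕ, pois t n * Real.exp (θ * n)
      = (t * Real.exp θ) ^ n / n.factorial * Real.exp (-t) := fun n => pois_mul_exp t θ n
  rw [tsum_congr this, tsum_mul_right, tsum_exp, ← Real.exp_add]
  ring_nf

lemma tsum_pois (t : ℝ) : ∑' n : ℕ, pois t n = 1 := by
  have := tsum_pois_exp t 0
  simp only [Real.exp_zero, mul_one, Nat.cast_zero, mul_zero] at this
  simp only [zero_mul, Real.exp_zero, mul_one, sub_self] at this
  simpa using this

lemma chernoff_tail {t θ : ℝ} (ht : 0 ≤ t) (hθ : 0 ≤ θ) (N : ℕ) :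
    ∑' n : ℕ, pois t (n + N) ≤ Real.exp (t * Real.exp θ - t - θ * N) := by
  set g : ℕ → ℝ := fun k => pois t k * Real.exp (θ * k) with hg
  have hsum : Summable g := summable_pois_exp t θ
  have hsub : Summable (fun n : ℕ => g (n + N)) := by
    rw [summable_nat_add_iff]; exact hsum
  have hpsub : Summable (fun n : ℕ => pois t (n + N)) := by
    rw [summable_nat_add_iff]; exact summable_pois t
  have h1 : ∑' n : ℕ, pois t (n + N)
      ≤ ∑' n : ℕ, g (n + N) * Real.exp (-(θ * N)) := by
    refine Summable.tsum_mono hpsub (hsub.mul_right _) (fun n => ?_)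
    have h2 : (1:ℝ) ≤ Real.exp (θ * (n + N : ℕ)) * Real.exp (-(θ * N)) := by
      rw [← Real.exp_add, ← Real.exp_zero]
      apply Real.exp_le_exp.2
      have h3 : (0:ℝ) ≤ θ * n := by positivity
      push_cast; nlinarith
    have h4 := pois_nonneg ht (n + N)
    simp only [hg]
    nlinarith
  have h3 : ∑' n : ℕ, g (n + N) * Real.exp (-(θ * N))
      = (∑' n : ℕ, g (n + N)) * Real.exp (-(θ * N)) := tsum_mul_right
  have h4 : ∑' n : ℕ, g (n + N) ≤ Real.exp (t * Real.exp θ - t) := by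
    rw [← tsum_pois_exp t θ]
    have h5 := Summable.sum_add_tsum_nat_add (f := g) N hsum
    have hhead : 0 ≤ ∑ i ∈ Finset.range N, g i := by
      refine Finset.sum_nonneg fun i _ => mul_nonneg (pois_nonneg ht i) (Real.exp_nonneg _)
    have : ∑' n : ℕ, pois t n * Real.exp (θ * n) = ∑' n : ℕ, g n := rfl
    rw [this]
    linarith
  calc ∑' n : ℕ, pois t (n + N) ≤ _ := h1
    _ = _ := h3
    _ ≤ Real.exp (t * Real.exp θ - t) * Real.exp (-(θ * N)) := by
        refine mul_le_mul_of_nonneg_right h4 (Real.exp_nonneg _)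
    _ = Real.exp (t * Real.exp θ - t - θ * N) := by rw [← Real.exp_add]; ring_nf

lemma chernoff_head {t θ : ℝ} (ht : 0 ≤ t) (hθ : 0 ≤ θ) (N : ℕ) :
    ∑ n ∈ Finset.range N, pois t n ≤ Real.exp (t * Real.exp (-θ) - t + θ * N) := by
  have h1 : ∑ n ∈ Finset.range N, pois t n
      ≤ ∑ n ∈ Finset.range N, pois t n * Real.exp (-θ * n) * Real.exp (θ * N) := by
    refine Finset.sum_le_sum fun n hn => ?_
    have hn' : (n:ℝ) ≤ N := by exact_mod_cast (Finset.mem_range.1 hn).le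
    have h2 : (1:ℝ) ≤ Real.exp (-θ * n) * Real.exp (θ * N) := by
      rw [← Real.exp_add, ← Real.exp_zero]
      apply Real.exp_le_exp.2
      nlinarith
    nlinarith [pois_nonneg ht n, h2]
  have h4 : ∑ n ∈ Finset.range N, pois t n * Real.exp (-θ * n)
      ≤ Real.exp (t * Real.exp (-θ) - t) := by
    rw [← tsum_pois_exp t (-θ)]
    exact Summable.sum_le_tsum _ (fun i _ => mul_nonneg (pois_nonneg ht i) (Real.exp_nonneg _))
      (summable_pois_exp t (-θ))
  calc ∑ n ∈ Finset.range N, pois t n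
      ≤ (∑ n ∈ Finset.range N, pois t n * Real.exp (-θ * n)) * Real.exp (θ * N) := by
        rw [Finset.sum_mul]; exact h1
    _ ≤ Real.exp (t * Real.exp (-θ) - t) * Real.exp (θ * N) :=
        mul_le_mul_of_nonneg_right h4 (Real.exp_nonneg _)
    _ = Real.exp (t * Real.exp (-θ) - t + θ * N) := by rw [← Real.exp_add]

lemma pois_succ (t : ℝ) (n : ℕ) : pois t (n + 1) = pois t n * (t / (n + 1)) := by
  unfold pois
  rw [Nat.factorial_succ]
  push_cast
  field_simp
  ring

noncomputable def ker (t u : ℝ) : ℝ :=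
  Real.exp (u * Real.log t - Real.log (Real.Gamma (u + 1)) - t)

lemma ker_nonneg (t u : ℝ) : 0 ≤ ker t u := Real.exp_nonneg _

lemma ker_eq {t u : ℝ} (ht : 0 < t) (hu : -1 < u) :
    ker t u = t ^ u * Real.exp (-t) / Real.Gamma (u + 1) := by
  have hG : 0 < Real.Gamma (u + 1) := Real.Gamma_pos_of_pos (by linarith)
  unfold ker
  rw [Real.exp_sub, Real.exp_sub, Real.exp_log hG, Real.rpow_def_of_pos ht,
    mul_comm (Real.log t) u, Real.exp_neg]
  field_simp

lemma pois_eq_ker {t : ℝ} (ht : 0 < t) (n : ℕ) : pois t n = ker t n := by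
  rw [ker_eq ht (lt_of_lt_of_le neg_one_lt_zero (Nat.cast_nonneg n)), Real.rpow_natCast, Real.Gamma_nat_eq_factorial]
  rfl

lemma logGamma_slope {n : ℕ} (hn : 1 ≤ n) {u : ℝ} (hu : (n:ℝ) < u) :
    (u - n) * Real.log n ≤ Real.log (Real.Gamma (u + 1)) - Real.log (Real.Gamma ((n:ℝ) + 1)) := by
  have hn0 : (0:ℝ) < n := by exact_mod_cast hn
  have hs := Real.convexOn_log_Gamma.slope_mono_adjacent
      (x := (n:ℝ)) (y := (n:ℝ) + 1) (z := u + 1)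
      (Set.mem_Ioi.2 hn0) (Set.mem_Ioi.2 (by linarith)) (by linarith) (by linarith)
  simp only [Function.comp] at hs
  have hd1 : (n:ℝ) + 1 - n = 1 := by ring
  have hd2 : u + 1 - ((n:ℝ) + 1) = u - n := by ring
  rw [hd1, hd2, div_one] at hs
  have hun : 0 < u - n := by linarith
  rw [le_div_iff₀ hun] at hs
  have hΓn : Real.log (Real.Gamma ((n:ℝ) + 1)) = Real.log n + Real.log (Real.Gamma n) := by
    rw [Real.Gamma_add_one (ne_of_gt hn0),
      Real.log_mul (ne_of_gt hn0) (ne_of_gt (Real.Gamma_pos_of_pos hn0))]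
  nlinarith [hs]

lemma ker_le {t : ℝ} (ht : 0 < t) {n : ℕ} (hn : 1 ≤ n) {u : ℝ} (h1 : (n:ℝ) ≤ u)
    (h2 : u ≤ (n:ℝ) + 1) : ker t u ≤ pois t n * max 1 (t / n) := by
  have hn0 : (0:ℝ) < n := by exact_mod_cast hn
  have key2 : (u - n) * Real.log n
      ≤ Real.log (Real.Gamma (u + 1)) - Real.log (Real.Gamma ((n:ℝ) + 1)) := by
    rcases eq_or_lt_of_le h1 with heq | hlt
    · rw [← heq]; simp
    · exact logGamma_slope hn hlt
  have key : u * Real.log t - Real.log (Real.Gamma (u + 1)) - t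
      ≤ ((n:ℝ) * Real.log t - Real.log (Real.Gamma ((n:ℝ) + 1)) - t)
        + (u - n) * (Real.log t - Real.log n) := by nlinarith [key2]
  have step1 : ker t u ≤ ker t n * Real.exp ((u - n) * (Real.log t - Real.log n)) := by
    rw [ker, ker, ← Real.exp_add]
    exact Real.exp_le_exp.2 key
  have step2 : Real.exp ((u - n) * (Real.log t - Real.log n)) ≤ max 1 (t / n) := by
    have hc : Real.log t - Real.log n = Real.log (t / n) :=
      (Real.log_div (ne_of_gt ht) (ne_of_gt hn0)).symm
    rw [hc]
    rcases le_total (Real.log (t / n)) 0 with hc0 | hc0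
    · refine le_trans ?_ (le_max_left _ _)
      rw [← Real.exp_zero]
      exact Real.exp_le_exp.2 (by nlinarith)
    · refine le_trans ?_ (le_max_right _ _)
      have haux : (u - (n:ℝ)) * Real.log (t / n) ≤ Real.log (t / n) := by nlinarith
      refine le_trans (Real.exp_le_exp.2 haux) ?_
      rw [Real.exp_log (show (0:ℝ) < t / n by positivity)]
  calc ker t u ≤ ker t n * Real.exp ((u - n) * (Real.log t - Real.log n)) := step1
    _ ≤ ker t n * max 1 (t / n) := by
        refine mul_le_mul_of_nonneg_left step2 (ker_nonneg _ _)
    _ = pois t n * max 1 (t / n) := by rw [← pois_eq_ker ht]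

lemma le_ker {t : ℝ} (ht : 0 < t) {n : ℕ} (hn : 1 ≤ n) {u : ℝ} (h1 : (n:ℝ) ≤ u)
    (h2 : u ≤ (n:ℝ) + 1) : pois t n * min 1 (t / ((n:ℝ) + 1)) ≤ ker t u := by
  have hn0 : (0:ℝ) < n := by exact_mod_cast hn
  have ha : (0:ℝ) ≤ (n:ℝ) + 1 - u := by linarith
  have hb : (0:ℝ) ≤ u - n := by linarith
  have hab : ((n:ℝ) + 1 - u) + (u - n) = 1 := by ring
  have hconv := Real.convexOn_log_Gamma.2
      (Set.mem_Ioi.2 (show (0:ℝ) < (n:ℝ) + 1 by linarith))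
      (Set.mem_Ioi.2 (show (0:ℝ) < ((n:ℝ) + 1) + 1 by linarith)) ha hb hab
  simp only [Function.comp, smul_eq_mul] at hconv
  have harg : ((n:ℝ) + 1 - u) * ((n:ℝ) + 1) + (u - n) * (((n:ℝ) + 1) + 1) = u + 1 := by ring
  rw [harg] at hconv
  set X : ℝ := (n:ℝ) * Real.log t - Real.log (Real.Gamma ((n:ℝ) + 1)) - t with hX
  set Y : ℝ := ((n:ℝ) + 1) * Real.log t - Real.log (Real.Gamma (((n:ℝ) + 1) + 1)) - t with hY
  have hcombo : ((n:ℝ) + 1 - u) * X + (u - n) * Y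
      ≤ u * Real.log t - Real.log (Real.Gamma (u + 1)) - t := by
    rw [hX, hY]; nlinarith [hconv]
  have hminXY : min X Y ≤ ((n:ℝ) + 1 - u) * X + (u - n) * Y := by
    rcases le_total X Y with hxy | hxy
    · rw [min_eq_left hxy]; nlinarith
    · rw [min_eq_right hxy]; nlinarith
  have hker : min (ker t n) (ker t ((n:ℝ) + 1)) ≤ ker t u := by
    have h5 : min (ker t (n:ℝ)) (ker t ((n:ℝ) + 1)) = Real.exp (min X Y) := by
      rw [ker, ker, ← hX, ← hY, Real.exp_monotone.map_min]
    rw [h5, ker]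
    exact Real.exp_le_exp.2 (le_trans hminXY hcombo)
  have hcast : ((n + 1 : ℕ) : ℝ) = (n:ℝ) + 1 := by push_cast; ring
  have hmin_eq : min (pois t n) (pois t (n + 1)) = pois t n * min 1 (t / ((n:ℝ) + 1)) := by
    rw [pois_succ]
    rw [mul_min_of_nonneg _ _ (pois_nonneg ht.le n), mul_one]
  calc pois t n * min 1 (t / ((n:ℝ) + 1)) = min (pois t n) (pois t (n + 1)) := hmin_eq.symm
    _ = min (ker t n) (ker t ((n:ℝ) + 1)) := by
        rw [pois_eq_ker ht, pois_eq_ker ht, hcast]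
    _ ≤ ker t u := hker



lemma integral_Ioc_split (g : ℝ → ℝ) {N₁ N₂ : ℕ} (h : N₁ ≤ N₂)
    (hint : IntegrableOn g (Set.Ioc (N₁:ℝ) (N₂:ℝ))) :
    ∫ u in Set.Ioc (N₁:ℝ) (N₂:ℝ), g u
      = ∑ n ∈ Finset.Ico N₁ N₂, ∫ u in Set.Ioc (n:ℝ) ((n:ℝ)+1), g u := by
  induction N₂, h using Nat.le_induction with
  | base => simp
  | succ k hk ih =>
      have hcast : ((k + 1 : ℕ) : ℝ) = (k:ℝ) + 1 := by push_cast; ring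
      have hle1 : (N₁:ℝ) ≤ (k:ℝ) := by exact_mod_cast hk
      have hunion : Set.Ioc (N₁:ℝ) (k:ℝ) ∪ Set.Ioc (k:ℝ) ((k:ℝ)+1)
          = Set.Ioc (N₁:ℝ) ((k:ℝ)+1) := Set.Ioc_union_Ioc_eq_Ioc hle1 (by linarith)
      rw [hcast] at hint ⊢
      have hint1 : IntegrableOn g (Set.Ioc (N₁:ℝ) (k:ℝ)) :=
        hint.mono_set (Set.Ioc_subset_Ioc_right (by linarith))
      have hint2 : IntegrableOn g (Set.Ioc (k:ℝ) ((k:ℝ)+1)) :=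
        hint.mono_set (Set.Ioc_subset_Ioc_left hle1)
      rw [← hunion, setIntegral_union (Set.Ioc_disjoint_Ioc_of_le le_rfl) measurableSet_Ioc hint1 hint2,
        Finset.sum_Ico_succ_top hk, ih hint1]

lemma integral_Ioc_unit_le {g : ℝ → ℝ} {a c : ℝ}
    (hint : IntegrableOn g (Set.Ioc a (a+1))) (hc : 0 ≤ c)
    (hle : ∀ u ∈ Set.Ioc a (a+1), g u ≤ c) :
    ∫ u in Set.Ioc a (a+1), g u ≤ c := by
  have h1 : ∫ u in Set.Ioc a (a+1), g u ≤ ∫ _ in Set.Ioc a (a+1), c :=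
    setIntegral_mono_on hint (integrableOn_const (by
      rw [Real.volume_Ioc]; exact ENNReal.ofReal_ne_top)) measurableSet_Ioc hle
  rw [setIntegral_const, Real.volume_real_Ioc] at h1
  simpa using h1

lemma le_integral_Ioc_unit {g : ℝ → ℝ} {a c : ℝ}
    (hint : IntegrableOn g (Set.Ioc a (a+1)))
    (hle : ∀ u ∈ Set.Ioc a (a+1), c ≤ g u) :
    c ≤ ∫ u in Set.Ioc a (a+1), g u := by
  have h1 : ∫ _ in Set.Ioc a (a+1), c ≤ ∫ u in Set.Ioc a (a+1), g u :=
    setIntegral_mono_on (integrableOn_const (by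
      rw [Real.volume_Ioc]; exact ENNReal.ofReal_ne_top)) hint measurableSet_Ioc hle
  rw [setIntegral_const, Real.volume_real_Ioc] at h1
  simpa using h1


-- continuity of the kernel, standalone test
lemma kerCont (t : ℝ) :
    ContinuousOn (fun u : ℝ => Real.exp (u * Real.log t - Real.log (Real.Gamma (u + 1)) - t))
      (Set.Ici (1:ℝ)) := by
  refine Real.continuous_exp.comp_continuousOn ?_
  refine ContinuousOn.sub (ContinuousOn.sub ?_ ?_) continuousOn_const
  · exact continuousOn_id.mul continuousOn_const
  · intro u hu
    have hu1 : (1:ℝ) ≤ u := hu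
    refine ContinuousAt.continuousWithinAt ?_
    have hG : DifferentiableAt ℝ Real.Gamma (u + 1) := by
      refine Real.differentiableAt_Gamma (fun n => ?_)
      have hn := Nat.cast_nonneg (α := ℝ) n
      intro h
      linarith
    have hGpos : 0 < Real.Gamma (u + 1) := Real.Gamma_pos_of_pos (by linarith)
    have h1 : ContinuousAt (fun v : ℝ => Real.Gamma (v + 1)) u := by
      have := ContinuousAt.comp (x := u) (f := fun v : ℝ => v + 1) hG.continuousAt ((continuous_add_right (1:ℝ)).continuousAt)
      exact this
    have h2 : ContinuousAt (fun v : ℝ => Real.log (Real.Gamma (v + 1))) u := by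
      have := ContinuousAt.comp (x := u) (f := fun v : ℝ => Real.Gamma (v + 1)) (Real.continuousAt_log (ne_of_gt hGpos)) h1
      exact this
    exact h2

-- decay of the error term
lemma err_tendsto (A B c : ℝ) (hc : 0 < c) :
    Tendsto (fun m : ℝ => (A + B * m) * Real.exp (1 - c * m)) atTop (nhds 0) := by
  have t1 : Tendsto (fun m : ℝ => c * m) atTop atTop :=
    Tendsto.const_mul_atTop hc tendsto_id
  have t2 : Tendsto (fun y : ℝ => y * Real.exp (-y)) atTop (nhds 0) := by
    have := Real.tendsto_pow_mul_exp_neg_atTop_nhds_zero 1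
    simpa using this
  have t3 : Tendsto (fun m : ℝ => Real.exp (-(c * m))) atTop (nhds 0) :=
    Real.tendsto_exp_atBot.comp (tendsto_neg_atBot_iff.2 t1)
  have t4 : Tendsto (fun m : ℝ => (c * m) * Real.exp (-(c * m))) atTop (nhds 0) := t2.comp t1
  have main : Tendsto (fun m : ℝ =>
      (A * Real.exp 1) * Real.exp (-(c * m))
        + (B * Real.exp 1 / c) * ((c * m) * Real.exp (-(c * m)))) atTop (nhds 0) := by
    have := (t3.const_mul (A * Real.exp 1)).add (t4.const_mul (B * Real.exp 1 / c))
    simpa using this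
  refine main.congr fun m => ?_
  have he : Real.exp (1 - c * m) = Real.exp 1 * Real.exp (-(c * m)) := by
    rw [← Real.exp_add]; ring_nf
  rw [he]; field_simp


lemma exp_quad_bound {c : ℝ} (h0 : -1 ≤ c) (h1 : c ≤ 1) : Real.exp c ≤ 1 + c + c^2 := by
  have hb := Real.exp_bound (x := c) (by rw [abs_le]; exact ⟨h0, h1⟩) (n := 2) (by norm_num)
  have hs : ∑ i ∈ Finset.range 2, c ^ i / (Nat.factorial i) = 1 + c := by
    simp [Finset.sum_range_succ]
  rw [hs] at hb
  norm_num at hb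
  have h2 := (abs_le.1 hb).2
  nlinarith [sq_abs c, sq_nonneg c]


lemma tendsto_trunc_integral (f0 : ℝ → ℝ)
    (hint : IntegrableOn f0 (Set.Ioi 0))
    (hprob : ∫ x in Set.Ioi (0:ℝ), f0 x = 1) :
    Tendsto (fun m : ℝ => ∫ s in Set.Icc m⁻¹ m, f0 s) atTop (nhds 1) := by
  have hcov : AECover (MeasureTheory.volume.restrict (Set.Ioi (0:ℝ))) atTop
      (fun m : ℝ => Set.Ioc m⁻¹ m) := by
    constructor
    · rw [ae_restrict_iff' measurableSet_Ioi]
      refine ae_of_all _ fun x hx => ?_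
      have hx0 : (0:ℝ) < x := hx
      have h1 : ∀ᶠ m : ℝ in atTop, m⁻¹ < x := by
        have : Tendsto (fun m : ℝ => m⁻¹) atTop (nhds 0) := tendsto_inv_atTop_zero
        exact this.eventually_lt_const hx0
      have h2 : ∀ᶠ m : ℝ in atTop, x ≤ m := eventually_ge_atTop x
      filter_upwards [h1, h2] with m hm1 hm2
      exact ⟨hm1, hm2⟩
    · intro m; exact measurableSet_Ioc
  have h := hcov.integral_tendsto_of_countably_generated hint
  rw [hprob] at h
  have heq : ∀ᶠ m : ℝ in atTop,
      (∫ x in Set.Ioc m⁻¹ m, f0 x ∂(MeasureTheory.volume.restrict (Set.Ioi (0:ℝ))))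
        = ∫ s in Set.Icc m⁻¹ m, f0 s := by
    filter_upwards [eventually_ge_atTop (1:ℝ)] with m hm
    have hm0 : (0:ℝ) < m := by linarith
    have hsub : Set.Ioc m⁻¹ m ⊆ Set.Ioi (0:ℝ) := fun y hy =>
      lt_trans (by positivity) hy.1
    rw [Measure.restrict_restrict measurableSet_Ioc, Set.inter_eq_self_of_subset_left hsub,
      integral_Icc_eq_integral_Ioc]
  exact Tendsto.congr' heq h


lemma aux_up {fx M ε ε₀ C : ℝ} (h1 : 0 < fx) (h2 : fx ≤ M) (h3 : 0 < ε₀) (h4 : 0 ≤ C)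
    (h5 : C ≤ 1+2*ε) (h6 : 0 < ε) :
    (fx + ε₀/8)*C - fx ≤ 2*ε*M + (ε₀/8)*(1+2*ε) := by
  nlinarith [mul_le_mul_of_nonneg_left h5 (show (0:ℝ) ≤ fx + ε₀/8 by linarith),
    mul_le_mul_of_nonneg_left h2 h6.le]

lemma aux_lo {fx M ε ε₀ C Et : ℝ} (h1 : 0 < fx) (h2 : fx ≤ M) (h3 : 0 < ε₀) (h4 : 0 ≤ C)
    (h5 : C ≤ 1+2*ε) (h6 : 0 < ε) (h7 : ε ≤ 1/2) (h8 : 0 < Et)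
    (h9 : (1-2*ε)*(1-2*Et) ≤ C) :
    fx - (fx - ε₀/8)*C ≤ M*(2*ε) + 2*M*Et + (ε₀/8)*(1+2*ε) := by
  have hM0 : 0 < M := lt_of_lt_of_le h1 h2
  have he : 1 - C ≤ 2*ε + 2*Et - 4*ε*Et := by nlinarith
  rcases le_total (1 - C) 0 with hc | hc
  · nlinarith [mul_nonneg h6.le h8.le,
      mul_le_mul_of_nonneg_right (show (1:ℝ) ≤ C by linarith) h1.le]
  · have g1 : fx * (1 - C) ≤ M * (1 - C) := mul_le_mul_of_nonneg_right h2 hc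
    have g2 : M * (1 - C) ≤ M * (2*ε + 2*Et - 4*ε*Et) :=
      mul_le_mul_of_nonneg_left he hM0.le
    nlinarith [mul_nonneg (mul_nonneg h6.le h8.le) hM0.le]

set_option maxHeartbeats 1000000 in
lemma kernel_integral_tendsto (f0 : ℝ → ℝ) (hf0_cont : ContinuousOn f0 (Set.Ici 0))
    (M : ℝ) (hM : ∀ y : ℝ, 0 < y → 0 < f0 y ∧ f0 y ≤ M) (x : ℝ) (hx : 0 < x) :
    Tendsto (fun m : ℝ => ∫ u in Set.Ioc (1:ℝ) (m^2), ker (m*x) u * f0 (u/m)) atTop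
      (nhds (f0 x)) := by
  have hfx_pos : 0 < f0 x := (hM x hx).1
  have hfxM : f0 x ≤ M := (hM x hx).2
  have hMpos : 0 < M := lt_of_lt_of_le hfx_pos hfxM
  rw [Metric.tendsto_nhds]
  intro ε₀ hε₀
  have hcx : ContinuousAt f0 x := hf0_cont.continuousAt (Ici_mem_nhds hx)
  obtain ⟨δc, hδc, hδ⟩ := Metric.continuousAt_iff.1 hcx (ε₀/8) (by positivity)
  set ε : ℝ := min (1/2) (min (ε₀/(16*M)) (δc/(2*x))) with hεdef
  have hε_pos : 0 < ε :=
    lt_min (by norm_num) (lt_min (by positivity) (by positivity))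
  have hε_half : ε ≤ 1/2 := min_le_left _ _
  have hε_M : ε ≤ ε₀/(16*M) := le_trans (min_le_right _ _) (min_le_left _ _)
  have hε_δ : ε ≤ δc/(2*x) := le_trans (min_le_right _ _) (min_le_right _ _)
  have hεM' : ε*(16*M) ≤ ε₀ := (le_div_iff₀ (by positivity)).1 hε_M
  have hεδ' : ε*(2*x) ≤ δc := (le_div_iff₀ (by positivity)).1 hε_δ
  have hexp_up : Real.exp (ε/2) ≤ 1 + ε/2 + (ε/2)^2 :=
    exp_quad_bound (by linarith only [hε_pos]) (by linarith only [hε_half])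
  have hexp_dn : Real.exp (-(ε/2)) ≤ 1 - ε/2 + (ε/2)^2 := by
    have h := exp_quad_bound (c := -(ε/2)) (by linarith only [hε_half])
      (by linarith only [hε_pos])
    linarith only [h]
  have hcc : (0:ℝ) < x*ε^2/4 := by positivity
  have hEv6 : ∀ᶠ m : ℝ in atTop,
      (4*M + 2*M*x*m) * Real.exp (1 - (x*ε^2/4)*m) < ε₀/2 :=
    (err_tendsto (4*M) (2*M*x) (x*ε^2/4) hcc).eventually_lt_const (by positivity)
  filter_upwards [eventually_ge_atTop (1:ℝ), eventually_gt_atTop (4/δc),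
    eventually_ge_atTop (1/((1-ε)*x)), eventually_ge_atTop (2/(ε*x)),
    eventually_ge_atTop ((1+ε)*x+2), hEv6] with m hm1 hm2 hm3 hm4 hm5 hm6
  show dist (∫ u in Set.Ioc (1:ℝ) (m^2), ker (m*x) u * f0 (u/m)) (f0 x) < ε₀
  have hm0 : (0:ℝ) < m := lt_of_lt_of_le one_pos hm1
  set t : ℝ := m * x with htdef
  have ht0 : 0 < t := by positivity
  have h1εx : (0:ℝ) < (1-ε)*x := by nlinarith [hε_half, hx]
  have h3 : 1 ≤ (1-ε)*t := by
    have h := mul_le_mul_of_nonneg_left hm3 h1εx.le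
    rw [htdef]
    have he : ((1-ε)*x) * (1/((1-ε)*x)) = 1 := by field_simp [show (1:ℝ) - ε ≠ 0 by linarith]
    linarith only [h, he]
  have h4 : 2 ≤ ε*t := by
    have hεx : (0:ℝ) < ε*x := by positivity
    have h := mul_le_mul_of_nonneg_left hm4 hεx.le
    rw [htdef]
    have he : (ε*x) * (2/(ε*x)) = 2 := by field_simp
    linarith only [h, he]
  have ht1 : 1 ≤ t := by linarith only [h3, mul_nonneg hε_pos.le ht0.le]
  have h5 : (1+ε)*t + 2 ≤ m^2 := by
    rw [htdef]
    linarith only [mul_le_mul_of_nonneg_right hm5 hm0.le, hm1]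
  set Et : ℝ := Real.exp (1 - t*ε^2/4) with hEt
  have hEt_pos : 0 < Et := Real.exp_pos _
  set N₁ : ℕ := ⌈(1-ε)*t⌉₊ with hN₁
  set N₂ : ℕ := ⌈(1+ε)*t⌉₊ + 1 with hN₂
  set NB : ℕ := ⌈m^2⌉₊ with hNB
  have hN₁_ge : (1-ε)*t ≤ (N₁:ℝ) := Nat.le_ceil _
  have hN₁_le : (N₁:ℝ) ≤ (1-ε)*t + 1 :=
    (Nat.ceil_lt_add_one (show (0:ℝ) ≤ (1-ε)*t by linarith only [h3])).le
  have hN₁_pos : 1 ≤ N₁ := by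
    rw [hN₁]
    exact Nat.ceil_pos.2 (by linarith only [h3])
  have h1N₁ : (1:ℝ) ≤ (N₁:ℝ) := by exact_mod_cast hN₁_pos
  have hN₂_ge : (1+ε)*t ≤ (N₂:ℝ) := by
    rw [hN₂]
    push_cast
    linarith only [Nat.le_ceil ((1+ε)*t)]
  have hN₂_le : (N₂:ℝ) ≤ (1+ε)*t + 2 := by
    rw [hN₂]
    push_cast
    have h0 : (0:ℝ) ≤ (1+ε)*t := by positivity
    linarith only [Nat.ceil_lt_add_one h0]
  have hN₁₂r : (N₁:ℝ) ≤ (N₂:ℝ) := by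
    linarith only [hN₁_le, hN₂_ge, h4, mul_nonneg hε_pos.le ht0.le]
  have hN₁₂ : N₁ ≤ N₂ := by exact_mod_cast hN₁₂r
  have hN₂b : (N₂:ℝ) ≤ m^2 := le_trans hN₂_le h5
  have hbNB : (m^2:ℝ) ≤ (NB:ℝ) := Nat.le_ceil _
  have hN₂NB : N₂ ≤ NB := by exact_mod_cast le_trans hN₂b hbNB
  have h1N₂ : (1:ℝ) ≤ (N₂:ℝ) := le_trans h1N₁ hN₁₂r
  have h1NB : (1:ℝ) ≤ (NB:ℝ) := le_trans (le_trans h1N₂ hN₂b) hbNB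
  -- Chernoff bounds
  have hhead : ∑ n ∈ Finset.range N₁, pois t n ≤ Et := by
    refine le_trans (chernoff_head ht0.le (show (0:ℝ) ≤ ε/2 by linarith only [hε_pos]) N₁) ?_
    rw [hEt]
    apply Real.exp_le_exp.2
    have ha := mul_le_mul_of_nonneg_left hexp_dn ht0.le
    have hb : (ε/2)*(N₁:ℝ) ≤ (ε/2)*((1-ε)*t+1) :=
      mul_le_mul_of_nonneg_left hN₁_le (by linarith only [hε_pos])
    linarith only [ha, hb, hε_half, hε_pos]
  have htail : ∑' n : ℕ, pois t (n + N₂) ≤ Et := by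
    refine le_trans (chernoff_tail ht0.le (show (0:ℝ) ≤ ε/2 by linarith only [hε_pos]) N₂) ?_
    rw [hEt]
    apply Real.exp_le_exp.2
    have ha := mul_le_mul_of_nonneg_left hexp_up ht0.le
    have hb : (ε/2)*((1+ε)*t) ≤ (ε/2)*(N₂:ℝ) :=
      mul_le_mul_of_nonneg_left hN₂_ge (by linarith only [hε_pos])
    linarith only [ha, hb, hε_half, hε_pos, ht1]
  -- integrability
  have hkerC : ContinuousOn (ker t) (Set.Ici (1:ℝ)) := kerCont t
  have hf0C : ContinuousOn (fun u : ℝ => f0 (u/m)) (Set.Ici (1:ℝ)) := by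
    refine ContinuousOn.comp hf0_cont (Continuous.continuousOn (by fun_prop)) ?_
    intro u hu
    have hu1 : (1:ℝ) ≤ u := hu
    exact Set.mem_Ici.2 (div_nonneg (by linarith only [hu1]) hm0.le)
  set F : ℝ → ℝ := fun u => ker t u * f0 (u/m) with hF
  have hFC : ContinuousOn F (Set.Ici (1:ℝ)) := hkerC.mul hf0C
  have hFIcc : IntegrableOn F (Set.Icc (1:ℝ) (NB:ℝ)) :=
    (hFC.mono Set.Icc_subset_Ici_self).integrableOn_Icc
  have hkerIcc : IntegrableOn (ker t) (Set.Icc (1:ℝ) (NB:ℝ)) :=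
    (hkerC.mono Set.Icc_subset_Ici_self).integrableOn_Icc
  have hFint : ∀ a b : ℝ, 1 ≤ a → b ≤ (NB:ℝ) → IntegrableOn F (Set.Ioc a b) :=
    fun a b ha hb => hFIcc.mono_set
      (fun u hu => ⟨le_trans ha hu.1.le, le_trans hu.2 hb⟩)
  have hkerint : ∀ a b : ℝ, 1 ≤ a → b ≤ (NB:ℝ) → IntegrableOn (ker t) (Set.Ioc a b) :=
    fun a b ha hb => hkerIcc.mono_set
      (fun u hu => ⟨le_trans ha hu.1.le, le_trans hu.2 hb⟩)
  have hF_nonneg : ∀ u : ℝ, 0 < u → 0 ≤ F u := fun u hu =>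
    mul_nonneg (ker_nonneg _ _) (hM (u/m) (by positivity)).1.le
  -- per-interval bounds
  have hpiece_up : ∀ n : ℕ, 1 ≤ n → (n:ℝ)+1 ≤ (NB:ℝ) →
      ∫ u in Set.Ioc (n:ℝ) ((n:ℝ)+1), F u ≤ pois t n * ((1+t)*M) := by
    intro n hn hnb
    have hn1 : (1:ℝ) ≤ (n:ℝ) := by exact_mod_cast hn
    refine integral_Ioc_unit_le (hFint n ((n:ℝ)+1) hn1 hnb)
      (mul_nonneg (pois_nonneg ht0.le n) (by positivity)) ?_
    intro u hu
    have hup : 0 < u := lt_of_le_of_lt (by linarith only [hn1]) hu.1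
    have h1 : F u ≤ ker t u * M :=
      mul_le_mul_of_nonneg_left (hM (u/m) (by positivity)).2 (ker_nonneg _ _)
    have h2 : ker t u ≤ pois t n * max 1 (t/n) := ker_le ht0 hn hu.1.le hu.2
    have h3' : max 1 (t/(n:ℝ)) ≤ 1 + t := by
      apply max_le (by linarith only [ht0])
      have hd : t/(n:ℝ) ≤ t := by
        rw [div_le_iff₀ (by linarith only [hn1] : (0:ℝ) < (n:ℝ))]
        have := mul_nonneg ht0.le (show (0:ℝ) ≤ (n:ℝ)-1 by linarith only [hn1])
        linarith only [this]
      linarith only [hd, ht0]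
    calc F u ≤ ker t u * M := h1
      _ ≤ (pois t n * max 1 (t/n)) * M := mul_le_mul_of_nonneg_right h2 hMpos.le
      _ = pois t n * (max 1 (t/n) * M) := by ring
      _ ≤ pois t n * ((1+t)*M) := mul_le_mul_of_nonneg_left
          (mul_le_mul_of_nonneg_right h3' hMpos.le) (pois_nonneg ht0.le n)
  have hpieceC_up : ∀ n : ℕ, N₁ ≤ n → n < N₂ →
      ∫ u in Set.Ioc (n:ℝ) ((n:ℝ)+1), ker t u ≤ pois t n * (1+2*ε) := by
    intro n hn hn2
    have hn1 : 1 ≤ n := le_trans hN₁_pos hn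
    have hn1r : (1:ℝ) ≤ (n:ℝ) := by exact_mod_cast hn1
    have hnN₁ : (N₁:ℝ) ≤ (n:ℝ) := by exact_mod_cast hn
    have hn1N₂ : (n:ℝ)+1 ≤ (N₂:ℝ) := by exact_mod_cast hn2
    refine integral_Ioc_unit_le (hkerint n ((n:ℝ)+1) hn1r
      (le_trans hn1N₂ (le_trans hN₂b hbNB)))
      (mul_nonneg (pois_nonneg ht0.le n) (by linarith only [hε_pos])) ?_
    intro u hu
    refine le_trans (ker_le ht0 hn1 hu.1.le hu.2) ?_
    refine mul_le_mul_of_nonneg_left ?_ (pois_nonneg ht0.le n)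
    apply max_le (by linarith only [hε_pos])
    rw [div_le_iff₀ (by linarith only [hn1r] : (0:ℝ) < (n:ℝ))]
    have hA := mul_le_mul_of_nonneg_left (le_trans hN₁_ge hnN₁)
      (show (0:ℝ) ≤ 1+2*ε by linarith only [hε_pos])
    have hB := mul_nonneg (mul_nonneg hε_pos.le
      (show (0:ℝ) ≤ 1-2*ε by linarith only [hε_half])) ht0.le
    linarith only [hA, hB]
  have hpieceC_lo : ∀ n : ℕ, N₁ ≤ n → n < N₂ →
      (1-2*ε) * pois t n ≤ ∫ u in Set.Ioc (n:ℝ) ((n:ℝ)+1), ker t u := by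
    intro n hn hn2
    have hn1 : 1 ≤ n := le_trans hN₁_pos hn
    have hn1r : (1:ℝ) ≤ (n:ℝ) := by exact_mod_cast hn1
    have hn1N₂ : (n:ℝ)+1 ≤ (N₂:ℝ) := by exact_mod_cast hn2
    refine le_trans ?_ (le_integral_Ioc_unit (hkerint n ((n:ℝ)+1) hn1r
      (le_trans hn1N₂ (le_trans hN₂b hbNB)))
      (fun u hu => le_ker ht0 hn1 hu.1.le hu.2))
    have hminb : 1-2*ε ≤ min 1 (t/((n:ℝ)+1)) := by
      apply le_min (by linarith only [hε_pos])
      rw [le_div_iff₀ (by linarith only [hn1r] : (0:ℝ) < (n:ℝ)+1)]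
      have hc1 : (n:ℝ)+1 ≤ (1+ε)*t+2 := le_trans hn1N₂ hN₂_le
      have hA := mul_le_mul_of_nonneg_left hc1
        (show (0:ℝ) ≤ 1-2*ε by linarith only [hε_half])
      have hB := mul_nonneg (mul_nonneg hε_pos.le hε_pos.le) ht0.le
      linarith only [hA, hB, h4, hε_pos]
    calc (1-2*ε) * pois t n = pois t n * (1-2*ε) := by ring
      _ ≤ pois t n * min 1 (t/((n:ℝ)+1)) :=
          mul_le_mul_of_nonneg_left hminb (pois_nonneg ht0.le n)
  -- splits
  have hsplit2 : (∫ u in Set.Ioc (N₁:ℝ) (N₂:ℝ), F u) + (∫ u in Set.Ioc (N₂:ℝ) (m^2), F u)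
      = ∫ u in Set.Ioc (N₁:ℝ) (m^2), F u := by
    rw [← setIntegral_union (Set.Ioc_disjoint_Ioc_of_le le_rfl) measurableSet_Ioc
      (hFint _ _ h1N₁ (le_trans hN₂b hbNB)) (hFint _ _ h1N₂ hbNB),
      Set.Ioc_union_Ioc_eq_Ioc hN₁₂r hN₂b]
  have hsplit1 : (∫ u in Set.Ioc (1:ℝ) (N₁:ℝ), F u) + (∫ u in Set.Ioc (N₁:ℝ) (m^2), F u)
      = ∫ u in Set.Ioc (1:ℝ) (m^2), F u := by
    rw [← setIntegral_union (Set.Ioc_disjoint_Ioc_of_le le_rfl) measurableSet_Ioc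
      (hFint _ _ le_rfl (le_trans (le_trans hN₁₂r hN₂b) hbNB)) (hFint _ _ h1N₁ hbNB),
      Set.Ioc_union_Ioc_eq_Ioc h1N₁ (le_trans hN₁₂r hN₂b)]
  -- A1 bound
  have hIcoRange : Finset.Ico 1 N₁ ⊆ Finset.range N₁ := by
    rw [Finset.range_eq_Ico]
    exact Finset.Ico_subset_Ico (Nat.zero_le 1) le_rfl
  have hA1 : ∫ u in Set.Ioc (1:ℝ) (N₁:ℝ), F u ≤ (1+t)*M*Et := by
    have hsplit := integral_Ioc_split F hN₁_pos
      (by simpa using hFint 1 (N₁:ℝ) le_rfl (le_trans (le_trans hN₁₂r hN₂b) hbNB))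
    simp only [Nat.cast_one] at hsplit
    rw [hsplit]
    have step1 : ∑ n ∈ Finset.Ico 1 N₁, ∫ u in Set.Ioc (n:ℝ) ((n:ℝ)+1), F u
        ≤ ∑ n ∈ Finset.Ico 1 N₁, pois t n * ((1+t)*M) := by
      refine Finset.sum_le_sum fun n hn => ?_
      obtain ⟨hn1, hn2⟩ := Finset.mem_Ico.1 hn
      refine hpiece_up n hn1 ?_
      have hc : (n:ℝ)+1 ≤ (N₁:ℝ) := by exact_mod_cast hn2
      linarith only [hc, le_trans (le_trans hN₁₂r hN₂b) hbNB]
    refine le_trans step1 ?_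
    rw [← Finset.sum_mul]
    calc (∑ n ∈ Finset.Ico 1 N₁, pois t n) * ((1+t)*M)
        ≤ (∑ n ∈ Finset.range N₁, pois t n) * ((1+t)*M) :=
          mul_le_mul_of_nonneg_right
            (Finset.sum_le_sum_of_subset_of_nonneg hIcoRange
              (fun i _ _ => pois_nonneg ht0.le i)) (by positivity)
      _ ≤ Et * ((1+t)*M) := mul_le_mul_of_nonneg_right hhead (by positivity)
      _ = (1+t)*M*Et := by ring
  have hA1_nonneg : 0 ≤ ∫ u in Set.Ioc (1:ℝ) (N₁:ℝ), F u :=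
    setIntegral_nonneg measurableSet_Ioc (fun u hu => hF_nonneg u (lt_trans one_pos hu.1))
  -- A3 bound
  have hA3 : ∫ u in Set.Ioc (N₂:ℝ) (m^2), F u ≤ (1+t)*M*Et := by
    have hmono : ∫ u in Set.Ioc (N₂:ℝ) (m^2), F u ≤ ∫ u in Set.Ioc (N₂:ℝ) (NB:ℝ), F u := by
      refine setIntegral_mono_set (hFint _ _ h1N₂ le_rfl) ?_
        (HasSubset.Subset.eventuallyLE (Set.Ioc_subset_Ioc_right hbNB))
      refine (ae_restrict_iff' measurableSet_Ioc).2 (ae_of_all _ fun u hu => ?_)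
      exact hF_nonneg u (lt_of_lt_of_le (lt_of_lt_of_le one_pos h1N₂) hu.1.le)
    refine le_trans hmono ?_
    have hsplit := integral_Ioc_split F hN₂NB (hFint _ _ h1N₂ le_rfl)
    rw [hsplit]
    have step1 : ∑ n ∈ Finset.Ico N₂ NB, ∫ u in Set.Ioc (n:ℝ) ((n:ℝ)+1), F u
        ≤ ∑ n ∈ Finset.Ico N₂ NB, pois t n * ((1+t)*M) := by
      refine Finset.sum_le_sum fun n hn => ?_
      obtain ⟨hn1, hn2⟩ := Finset.mem_Ico.1 hn
      refine hpiece_up n (le_trans (le_trans hN₁_pos hN₁₂) hn1) ?_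
      have hc : (n:ℝ)+1 ≤ (NB:ℝ) := by exact_mod_cast hn2
      linarith only [hc]
    refine le_trans step1 ?_
    rw [← Finset.sum_mul]
    have hsum_tail : ∑ n ∈ Finset.Ico N₂ NB, pois t n ≤ ∑' n : ℕ, pois t (n + N₂) := by
      rw [Finset.sum_Ico_eq_sum_range]
      have he : ∀ i ∈ Finset.range (NB - N₂), pois t (N₂ + i) = pois t (i + N₂) :=
        fun i _ => by rw [add_comm]
      rw [Finset.sum_congr rfl he]
      exact Summable.sum_le_tsum _ (fun i _ => pois_nonneg ht0.le _)
        (by rw [summable_nat_add_iff]; exact summable_pois t)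
    calc (∑ n ∈ Finset.Ico N₂ NB, pois t n) * ((1+t)*M)
        ≤ Et * ((1+t)*M) :=
          mul_le_mul_of_nonneg_right (le_trans hsum_tail htail) (by positivity)
      _ = (1+t)*M*Et := by ring
  have hA3_nonneg : 0 ≤ ∫ u in Set.Ioc (N₂:ℝ) (m^2), F u :=
    setIntegral_nonneg measurableSet_Ioc
      (fun u hu => hF_nonneg u (lt_of_lt_of_le (lt_of_lt_of_le one_pos h1N₂) hu.1.le))
  -- C bounds
  set C : ℝ := ∫ u in Set.Ioc (N₁:ℝ) (N₂:ℝ), ker t u with hCdef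
  have hCsplit : C = ∑ n ∈ Finset.Ico N₁ N₂, ∫ u in Set.Ioc (n:ℝ) ((n:ℝ)+1), ker t u :=
    integral_Ioc_split (ker t) hN₁₂ (hkerint _ _ h1N₁ (le_trans hN₂b hbNB))
  have hC_nonneg : 0 ≤ C :=
    setIntegral_nonneg measurableSet_Ioc (fun u _ => ker_nonneg t u)
  have hC_up : C ≤ 1 + 2*ε := by
    rw [hCsplit]
    have step1 : ∑ n ∈ Finset.Ico N₁ N₂, ∫ u in Set.Ioc (n:ℝ) ((n:ℝ)+1), ker t u
        ≤ ∑ n ∈ Finset.Ico N₁ N₂, pois t n * (1+2*ε) := by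
      refine Finset.sum_le_sum fun n hn => ?_
      obtain ⟨hn1, hn2⟩ := Finset.mem_Ico.1 hn
      exact hpieceC_up n hn1 hn2
    refine le_trans step1 ?_
    rw [← Finset.sum_mul]
    have h1 : ∑ n ∈ Finset.Ico N₁ N₂, pois t n ≤ 1 := by
      rw [← tsum_pois t]
      exact Summable.sum_le_tsum _ (fun i _ => pois_nonneg ht0.le i) (summable_pois t)
    have h2 := mul_le_mul_of_nonneg_right h1 (show (0:ℝ) ≤ 1+2*ε by linarith only [hε_pos])
    linarith only [h2]
  have hC_lo : (1-2*ε)*(1-2*Et) ≤ C := by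
    rw [hCsplit]
    have hsum_lo : 1 - 2*Et ≤ ∑ n ∈ Finset.Ico N₁ N₂, pois t n := by
      rw [Finset.sum_Ico_eq_sub _ hN₁₂]
      have h2 := Summable.sum_add_tsum_nat_add (f := pois t) N₂ (summable_pois t)
      rw [tsum_pois] at h2
      linarith only [hhead, htail, h2]
    calc (1-2*ε)*(1-2*Et) ≤ (1-2*ε) * ∑ n ∈ Finset.Ico N₁ N₂, pois t n :=
          mul_le_mul_of_nonneg_left hsum_lo (by linarith only [hε_half])
      _ = ∑ n ∈ Finset.Ico N₁ N₂, (1-2*ε) * pois t n := Finset.mul_sum _ _ _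
      _ ≤ ∑ n ∈ Finset.Ico N₁ N₂, ∫ u in Set.Ioc (n:ℝ) ((n:ℝ)+1), ker t u := by
          refine Finset.sum_le_sum fun n hn => ?_
          obtain ⟨hn1, hn2⟩ := Finset.mem_Ico.1 hn
          exact hpieceC_lo n hn1 hn2
  -- A2 bounds
  have hf0mid : ∀ u ∈ Set.Ioc (N₁:ℝ) (N₂:ℝ), |f0 (u/m) - f0 x| < ε₀/8 := by
    intro u hu
    have hu1 : (1-ε)*t ≤ u := le_trans hN₁_ge hu.1.le
    have hu2 : u ≤ (1+ε)*t + 2 := le_trans hu.2 hN₂_le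
    rw [htdef] at hu1 hu2
    have hq1 := (div_le_div_iff_of_pos_right hm0).2 hu2
    have he1 : ((1+ε)*(m*x)+2)/m = (1+ε)*x + 2/m := by field_simp
    have hd1 : u/m - x ≤ ε*x + 2/m := by
      rw [he1] at hq1
      linarith only [hq1]
    have hq2 := (div_le_div_iff_of_pos_right hm0).2 hu1
    have he2 : ((1-ε)*(m*x))/m = (1-ε)*x := by field_simp
    have hd2 : x - u/m ≤ ε*x := by
      rw [he2] at hq2
      linarith only [hq2]
    have hm2' : 4 < m * δc := by
      rw [div_lt_iff₀ hδc] at hm2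
      linarith only [hm2]
    have h3' : 2/m < δc/2 := by
      rw [div_lt_div_iff₀ hm0 (by norm_num : (0:ℝ) < 2)]
      linarith only [hm2']
    have h4' : ε*x ≤ δc/2 := by linarith only [hεδ']
    have habs : dist (u/m) x < δc := by
      rw [Real.dist_eq, abs_sub_lt_iff]
      constructor
      · linarith only [hd1, h3', h4']
      · linarith only [hd2, h4', hδc]
    have := hδ habs
    rwa [Real.dist_eq] at this
  have hA2_up : (∫ u in Set.Ioc (N₁:ℝ) (N₂:ℝ), F u) ≤ (f0 x + ε₀/8) * C := by
    rw [hCdef, ← integral_const_mul]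
    refine setIntegral_mono_on (hFint _ _ h1N₁ (le_trans hN₂b hbNB))
      ((hkerint _ _ h1N₁ (le_trans hN₂b hbNB)).const_mul _) measurableSet_Ioc ?_
    intro u hu
    have h1 := (abs_lt.1 (hf0mid u hu)).2
    calc F u = ker t u * f0 (u/m) := rfl
      _ ≤ ker t u * (f0 x + ε₀/8) :=
          mul_le_mul_of_nonneg_left (by linarith only [h1]) (ker_nonneg _ _)
      _ = (f0 x + ε₀/8) * ker t u := by ring
  have hA2_lo : (f0 x - ε₀/8) * C ≤ ∫ u in Set.Ioc (N₁:ℝ) (N₂:ℝ), F u := by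
    rw [hCdef, ← integral_const_mul]
    refine setIntegral_mono_on ((hkerint _ _ h1N₁ (le_trans hN₂b hbNB)).const_mul _)
      (hFint _ _ h1N₁ (le_trans hN₂b hbNB)) measurableSet_Ioc ?_
    intro u hu
    have h1 := (abs_lt.1 (hf0mid u hu)).1
    calc (f0 x - ε₀/8) * ker t u = ker t u * (f0 x - ε₀/8) := by ring
      _ ≤ ker t u * f0 (u/m) :=
          mul_le_mul_of_nonneg_left (by linarith only [h1]) (ker_nonneg _ _)
      _ = F u := rfl
  -- final assembly
  have hm6' : (2*M*(1+t)+2*M)*Et < ε₀/2 := by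
    rw [hEt, htdef]
    have he1 : (1:ℝ) - m*x*ε^2/4 = 1 - (x*ε^2/4)*m := by ring
    have he2 : 2*M*(1+m*x)+2*M = 4*M + 2*M*x*m := by ring
    rw [he1, he2]
    exact hm6
  rw [Real.dist_eq, abs_sub_lt_iff, ← hsplit1, ← hsplit2]
  have hEtM : 2*M*Et ≤ (2*M*(1+t)+2*M)*Et := by
    have := mul_nonneg (mul_nonneg (mul_nonneg (by norm_num : (0:ℝ) ≤ 2) hMpos.le)
      (show (0:ℝ) ≤ 1+t by linarith only [ht1])) hEt_pos.le
    linarith only [this]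
  have h2tM : 2*((1+t)*M*Et) ≤ (2*M*(1+t)+2*M)*Et := by
    have := mul_nonneg (mul_nonneg hMpos.le hEt_pos.le) (by norm_num : (0:ℝ) ≤ 2)
    linarith only [this]
  have hfρC_up : (f0 x + ε₀/8) * C - f0 x ≤ 2*ε*M + (ε₀/8)*(1+2*ε) :=
    aux_up hfx_pos hfxM hε₀ hC_nonneg hC_up hε_pos
  have hfρC_lo : f0 x - (f0 x - ε₀/8) * C ≤ M*(2*ε) + 2*M*Et + (ε₀/8)*(1+2*ε) :=
    aux_lo hfx_pos hfxM hε₀ hC_nonneg hC_up hε_pos hε_half hEt_pos hC_lo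
  have hquarter : (ε₀/8)*(1+2*ε) ≤ ε₀/4 := by
    have := mul_le_mul_of_nonneg_left hε_half (show (0:ℝ) ≤ ε₀/4 by linarith only [hε₀])
    linarith only [this]
  have hεM2 : 2*ε*M ≤ ε₀/8 := by linarith only [hεM']
  constructor
  · have u0 : (∫ u in Set.Ioc (N₁:ℝ) (N₂:ℝ), F u) - f0 x ≤ 2*ε*M + (ε₀/8)*(1+2*ε) := by
      linarith only [hA2_up, hfρC_up]
    linarith only [hA1, hA3, u0, hquarter, hεM2, hm6', h2tM, hε₀]
  · have l0 : f0 x - (∫ u in Set.Ioc (N₁:ℝ) (N₂:ℝ), F u) ≤ M*(2*ε) + 2*M*Et + (ε₀/8)*(1+2*ε) := by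
      linarith only [hA2_lo, hfρC_lo]
    linarith only [hA1_nonneg, hA3_nonneg, l0, hquarter, hεM2, hm6', hEtM, hε₀]

end GammaSmooth

/-- **Lemma 6**: pointwise convergence of the gamma-kernel smoothing
`f_m(x) = t_m ∫_2^{1+m²} K_m(x;α) m⁻¹ f0((α−1)/m) dα` of a density `f0` on `[0,∞)`
satisfying the conditions of the gamma-mixture theorem, where `K_m(·;α)` is the
Gamma(α, 1/m) density and `t_m` the normalizing constant of `f0` restricted to `[1/m, m]`. -/
theorem gamma_kernel_smoothing_tendsto
    (f0 : ℝ → ℝ) (hf0_cont : ContinuousOn f0 (Set.Ici 0))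
    (hf0_prob : ∫ x in Set.Ioi (0 : ℝ), f0 x = 1)
    -- (B4) 0 < f0 ≤ M on (0,∞)
    (hf0_bdd : ∃ M : ℝ, ∀ x : ℝ, 0 < x → 0 < f0 x ∧ f0 x ≤ M)
    -- (B5) entropy condition
    (hf0_log : IntegrableOn (fun x => f0 x * log (f0 x)) (Set.Ioi 0))
    -- the one-sided lower envelope
    (δ : ℝ) (hδ : 0 < δ) (φδ : ℝ → ℝ)
    (hφδ_lt : ∀ x : ℝ, 0 < x → x < 1 → φδ x = sInf (f0 '' Set.Icc x (x + δ)))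
    (hφδ_ge : ∀ x : ℝ, 1 ≤ x → φδ x = sInf (f0 '' Set.Ioc (x - δ) x))
    -- (B6*) envelope integrability
    (hf0_env : IntegrableOn (fun x => f0 x * log (f0 x / φδ x)) (Set.Ioi 0))
    -- (B7*) moment condition
    (hf0_mom : ∃ η > (0 : ℝ),
      IntegrableOn (fun x => max (x ^ (-η - 2)) (x ^ (η + 2)) * f0 x) (Set.Ioi 0))
    -- the gamma kernel with shape α and scale 1/m
    (Km : ℝ → ℝ → ℝ → ℝ)
    (hKm : ∀ m x α : ℝ, Km m x α = m ^ α * x ^ (α - 1) * Real.exp (-m * x) / Real.Gamma α)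
    -- the normalizing constant
    (tm : ℝ → ℝ) (htm : ∀ m : ℝ, tm m = (∫ s in Set.Icc m⁻¹ m, f0 s)⁻¹)
    -- the smoothed density
    (fm : ℝ → ℝ → ℝ)
    (hfm : ∀ m x : ℝ, fm m x =
      tm m * ∫ α in Set.Icc (2 : ℝ) (1 + m ^ 2), Km m x α * m⁻¹ * f0 ((α - 1) / m)) :
    ∀ x : ℝ, 0 < x → Tendsto (fun m : ℝ => fm m x) atTop (nhds (f0 x)) := by
  intro x hx
  obtain ⟨M, hM⟩ := hf0_bdd
  have hf0_int : IntegrableOn f0 (Set.Ioi 0) := by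
    by_contra h
    rw [MeasureTheory.integral_undef h] at hf0_prob
    norm_num at hf0_prob
  have htm1 : Tendsto (fun m : ℝ => tm m) atTop (nhds 1) := by
    have h1 := GammaSmooth.tendsto_trunc_integral f0 hf0_int hf0_prob
    have h2 : Tendsto (fun m : ℝ => (∫ s in Set.Icc m⁻¹ m, f0 s)⁻¹) atTop (nhds 1⁻¹) :=
      h1.inv₀ one_ne_zero
    rw [inv_one] at h2
    exact h2.congr (fun m => (htm m).symm)
  have hker := GammaSmooth.kernel_integral_tendsto f0 hf0_cont M hM x hx
  have hmul := htm1.mul hker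
  rw [one_mul] at hmul
  refine hmul.congr' ?_
  filter_upwards [eventually_ge_atTop (1:ℝ)] with m hm1
  have hm0 : (0:ℝ) < m := lt_of_lt_of_le one_pos hm1
  rw [hfm m x]
  congr 1
  have h12 : (2:ℝ) ≤ 1 + m^2 := by nlinarith
  have h1m : (1:ℝ) ≤ m^2 := by nlinarith
  rw [integral_Icc_eq_integral_Ioc, ← intervalIntegral.integral_of_le h12]
  have hshift := intervalIntegral.integral_comp_add_right
    (a := (1:ℝ)) (b := m^2) (f := fun α => Km m x α * m⁻¹ * f0 ((α-1)/m)) 1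
  have he2 : m^2 + 1 = 1 + m^2 := by ring
  have he1 : (1:ℝ) + 1 = 2 := by norm_num
  rw [he1, he2] at hshift
  rw [← hshift, intervalIntegral.integral_of_le h1m]
  refine setIntegral_congr_fun measurableSet_Ioc (fun u hu => ?_)
  have hu1 : 1 < u := hu.1
  have hΓ : 0 < Real.Gamma (u+1) := Real.Gamma_pos_of_pos (by linarith)
  rw [GammaSmooth.ker_eq (by positivity) (by linarith : (-1:ℝ) < u), hKm]
  have hsimp1 : u + 1 - 1 = u := by ring
  rw [hsimp1]
  have h2 : m ^ (u+1) = m ^ u * m := Real.rpow_add_one (ne_of_gt hm0) u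
  have h3 : (m*x) ^ u = m ^ u * x ^ u := Real.mul_rpow hm0.le hx.le
  rw [h2, h3]
  have h4 : -m * x = -(m*x) := by ring
  rw [h4]
  field_simp
end
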